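/- Let A be a positive self-adjoint operator on a Hilbert space X with ‖e^{-tA}‖ ≤ e^{-δt} for some δ > 0, let x ∈ X, and T > 0. Then ∫_0^T ∫_0^t ‖A^{1/2} e^{-(t-r)A} x‖_X² dr dt = (T/2)‖x‖² − (1/2)∫_0^T (e^{-2tA} x, x)_X dt ≥ (T/2 − (1 − e^{-2Tδ})/(4δ)) ‖x‖²_X. -/

import Mathlib

open MeasureTheory

lemma aux_rint (c X2 t : ℝ) :
    ∫ r in (0:ℝ)..t, c * Real.exp (-(2*(t-r)*c)) * X2
      = (1 - Real.exp (-(2*t*c)))/2 * X2 := by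
  have hderiv : ∀ r ∈ Set.uIcc (0:ℝ) t,
      HasDerivAt (fun r => Real.exp (-(2*(t-r)*c))/2 * X2)
        (c * Real.exp (-(2*(t-r)*c)) * X2) r := by
    intro r _
    have h1 : HasDerivAt (fun r : ℝ => -(2*(t-r)*c)) (2*c) r := by
      have : HasDerivAt (fun r : ℝ => 2*c*r - 2*t*c) (2*c) r := by
        simpa using ((hasDerivAt_id r).const_mul (2*c)).sub_const (2*t*c)
      convert this using 2 with r
      ring
    have := ((h1.exp).div_const 2).mul_const X2
    refine this.congr_deriv ?_
    ring
  have hint : IntervalIntegrable (fun r => c * Real.exp (-(2*(t-r)*c)) * X2)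
      MeasureTheory.volume 0 t := by
    apply Continuous.intervalIntegrable
    fun_prop
  rw [intervalIntegral.integral_eq_sub_of_hasDerivAt hderiv hint]
  simp
  ring

lemma aux_nu_eq {σ : Type*} [MeasurableSpace σ] (μ : Measure σ) (x : σ → ℝ)
    (g : σ → ℝ) (hg : ∀ ω, x ω = 0 → g ω = 0) :
    ∫ ω, g ω ∂(μ.restrict {ω | x ω ≠ 0}) = ∫ ω, g ω ∂μ :=
  setIntegral_eq_integral_of_forall_compl_eq_zero (fun ω hω => hg ω (not_not.mp hω))

lemma aux_sf {σ : Type*} [MeasurableSpace σ] (μ : Measure σ) (x : σ → ℝ)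
    (hx : Measurable x) (hxL2 : Integrable (fun ω => x ω ^ 2) μ) :
    SigmaFinite (μ.restrict {ω | x ω ≠ 0}) := by
  constructor
  refine ⟨⟨fun n => {ω | ((n:ℝ)+1)⁻¹ ≤ x ω^2} ∪ {ω | x ω ≠ 0}ᶜ, fun _ => trivial,
    fun n => ?_, ?_⟩⟩
  · have hA : MeasurableSet {ω | ((n:ℝ)+1)⁻¹ ≤ x ω^2} :=
      measurableSet_le measurable_const (hx.pow_const 2)
    have hS : MeasurableSet {ω | x ω ≠ 0} := (hx (measurableSet_singleton 0)).compl
    rw [Measure.restrict_apply (hA.union hS.compl)]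
    refine lt_of_le_of_lt (measure_mono ?_) (hxL2.measure_ge_lt_top (ε := ((n:ℝ)+1)⁻¹)
      (by positivity))
    intro ω hω
    rcases hω.1 with h | h
    · exact h
    · exact absurd hω.2 h
  · ext ω
    simp only [Set.mem_iUnion, Set.mem_union, Set.mem_setOf_eq, Set.mem_compl_iff,
      Set.mem_univ, iff_true, not_not]
    by_cases h : x ω = 0
    · exact ⟨0, Or.inr h⟩
    · have hpos : 0 < x ω ^ 2 := by positivity
      obtain ⟨n, hn⟩ := exists_nat_one_div_lt hpos
      exact ⟨n, Or.inl (by rw [one_div] at hn; exact hn.le)⟩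

/-- For a positive invertible self-adjoint operator `A` with
`‖e^{-tA}‖ ≤ e^{-δt}`, `x ∈ X` and `T > 0`:
`∫_0^T∫_0^t ‖A^{1/2}e^{-(t-r)A}x‖² dr dt = (T/2)‖x‖² − (1/2)∫_0^T (e^{-2tA}x,x) dt
  ≥ (T/2 − (1−e^{-2Tδ})/(4δ))‖x‖²`.

Spectral model (spectral theorem): `X = L²(μ)`, `A` = multiplication by a measurable
`m ≥ δ > 0`; then `‖A^{1/2}e^{-uA}x‖² = ∫ m e^{-2um}x² dμ`,
`(e^{-2tA}x,x) = ∫ e^{-2tm}x² dμ`, `‖x‖² = ∫ x² dμ`. -/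
theorem statement7 {σ : Type*} [MeasurableSpace σ] (μ : Measure σ)
    (m : σ → ℝ) (hm : Measurable m) (δ : ℝ) (hδ : 0 < δ) (hmδ : ∀ ω, δ ≤ m ω)
    (x : σ → ℝ) (hx : Measurable x)
    (hxL2 : Integrable (fun ω => x ω ^ 2) μ)
    (T : ℝ) (hT : 0 < T) :
    (∫ t in (0:ℝ)..T, ∫ r in (0:ℝ)..t, ∫ ω, m ω * Real.exp (-(2 * (t - r) * m ω)) * x ω ^ 2 ∂μ)
        = T/2 * (∫ ω, x ω ^ 2 ∂μ)
          - (1/2) * ∫ t in (0:ℝ)..T, ∫ ω, Real.exp (-(2 * t * m ω)) * x ω ^ 2 ∂μ ∧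
    (T/2 - (1 - Real.exp (-(2 * T * δ))) / (4 * δ)) * (∫ ω, x ω ^ 2 ∂μ)
        ≤ ∫ t in (0:ℝ)..T, ∫ r in (0:ℝ)..t, ∫ ω, m ω * Real.exp (-(2 * (t - r) * m ω)) * x ω ^ 2 ∂μ := by
  set ν := μ.restrict {ω | x ω ≠ 0} with hνdef
  haveI : SigmaFinite ν := aux_sf μ x hx hxL2
  have hxL2ν : Integrable (fun ω => x ω ^ 2) ν := hxL2.restrict
  -- μ-integrals equal ν-integrals
  have hnu : ∀ t r : ℝ, (∫ ω, m ω * Real.exp (-(2 * (t - r) * m ω)) * x ω ^ 2 ∂μ)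
      = ∫ ω, m ω * Real.exp (-(2 * (t - r) * m ω)) * x ω ^ 2 ∂ν :=
    fun t r => (aux_nu_eq μ x _ (fun ω h => by simp [h])).symm
  have hnuE : ∀ t : ℝ, (∫ ω, Real.exp (-(2 * t * m ω)) * x ω ^ 2 ∂μ)
      = ∫ ω, Real.exp (-(2 * t * m ω)) * x ω ^ 2 ∂ν :=
    fun t => (aux_nu_eq μ x _ (fun ω h => by simp [h])).symm
  have hnuI : (∫ ω, x ω ^ 2 ∂μ) = ∫ ω, x ω ^ 2 ∂ν :=
    (aux_nu_eq μ x _ (fun ω h => by simp [h])).symm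
  set I0 : ℝ := ∫ ω, x ω ^ 2 ∂ν with hI0
  -- integrability of e^{-2tm} x² for t ≥ 0
  have hEint : ∀ t : ℝ, 0 ≤ t → Integrable (fun ω => Real.exp (-(2 * t * m ω)) * x ω ^ 2) ν := by
    intro t ht
    refine Integrable.mono' hxL2ν ?_ (Filter.Eventually.of_forall fun ω => ?_)
    · exact ((((hm.const_mul (2*t)).neg).exp).mul (hx.pow_const 2)).aestronglyMeasurable
    · have h1 : 0 < m ω := lt_of_lt_of_le hδ (hmδ ω)
      have h2 : Real.exp (-(2 * t * m ω)) ≤ 1 := Real.exp_le_one_iff.mpr (by nlinarith)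
      have h3 : (0:ℝ) ≤ Real.exp (-(2 * t * m ω)) * x ω ^ 2 := by positivity
      rw [Real.norm_of_nonneg h3]
      nlinarith [sq_nonneg (x ω)]
  -- Fubini for each slice t ≥ 0
  have hslice : ∀ t : ℝ, 0 ≤ t →
      (∫ r in (0:ℝ)..t, ∫ ω, m ω * Real.exp (-(2 * (t - r) * m ω)) * x ω ^ 2 ∂ν)
        = ∫ ω, (1 - Real.exp (-(2 * t * m ω)))/2 * x ω ^ 2 ∂ν := by
    intro t ht
    have hmeas : Measurable fun p : ℝ × σ =>
        m p.2 * Real.exp (-(2 * (t - p.1) * m p.2)) * x p.2 ^ 2 := by fun_prop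
    have hnormeq : ∀ ω, (∫ r in Set.Ioc (0:ℝ) t,
        ‖m ω * Real.exp (-(2 * (t - r) * m ω)) * x ω ^ 2‖)
        = (1 - Real.exp (-(2 * t * m ω)))/2 * x ω ^ 2 := by
      intro ω
      have h1 : ∀ r : ℝ, ‖m ω * Real.exp (-(2 * (t - r) * m ω)) * x ω ^ 2‖
          = m ω * Real.exp (-(2 * (t - r) * m ω)) * x ω ^ 2 := fun r =>
        Real.norm_of_nonneg (by have := lt_of_lt_of_le hδ (hmδ ω); positivity)
      simp_rw [h1]
      rw [← intervalIntegral.integral_of_le ht, aux_rint]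
    have hIntProd : Integrable (fun p : ℝ × σ =>
        m p.2 * Real.exp (-(2 * (t - p.1) * m p.2)) * x p.2 ^ 2)
        ((volume.restrict (Set.Ioc (0:ℝ) t)).prod ν) := by
      rw [integrable_prod_iff' hmeas.aestronglyMeasurable]
      constructor
      · refine Filter.Eventually.of_forall fun ω => ?_
        have hc : Continuous fun r : ℝ => m ω * Real.exp (-(2 * (t - r) * m ω)) * x ω ^ 2 := by
          fun_prop
        exact hc.integrableOn_Ioc
      · refine Integrable.mono' hxL2ν ?_ (Filter.Eventually.of_forall fun ω => ?_)
        · simp_rw [hnormeq]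
          exact ((((((hm.const_mul (2*t)).neg).exp).const_sub 1).div_const 2).mul
            (hx.pow_const 2)).aestronglyMeasurable
        · rw [hnormeq]
          have h1 : 0 < m ω := lt_of_lt_of_le hδ (hmδ ω)
          have h2 : Real.exp (-(2 * t * m ω)) ≤ 1 := Real.exp_le_one_iff.mpr (by nlinarith)
          have h3 : 0 < Real.exp (-(2 * t * m ω)) := Real.exp_pos _
          have h4 : (0:ℝ) ≤ (1 - Real.exp (-(2 * t * m ω)))/2 * x ω ^ 2 := by
            have : (0:ℝ) ≤ 1 - Real.exp (-(2 * t * m ω)) := by linarith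
            positivity
          rw [Real.norm_of_nonneg h4]
          nlinarith [sq_nonneg (x ω)]
    rw [intervalIntegral.integral_of_le ht]
    rw [integral_integral_swap hIntProd]
    refine integral_congr_ae (Filter.Eventually.of_forall fun ω => ?_)
    beta_reduce
    rw [← intervalIntegral.integral_of_le ht, aux_rint]
  -- continuous version of t ↦ ∫ e^{-2tm} x²
  set Em : ℝ → ℝ := fun t => ∫ ω, Real.exp (-(2 * max t 0 * m ω)) * x ω ^ 2 ∂ν with hEm
  have hEmcont : Continuous Em := by
    refine continuous_of_dominated (fun t =>
        ((((hm.const_mul (2 * max t 0)).neg).exp).mul (hx.pow_const 2)).aestronglyMeasurable)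
      (fun t => Filter.Eventually.of_forall fun ω => ?_) hxL2ν
      (Filter.Eventually.of_forall fun ω => by fun_prop)
    have h1 : 0 < m ω := lt_of_lt_of_le hδ (hmδ ω)
    have h2 : Real.exp (-(2 * max t 0 * m ω)) ≤ 1 :=
      Real.exp_le_one_iff.mpr (by nlinarith [le_max_right t 0])
    have h3 : (0:ℝ) ≤ Real.exp (-(2 * max t 0 * m ω)) * x ω ^ 2 := by positivity
    rw [Real.norm_of_nonneg h3]
    nlinarith [sq_nonneg (x ω)]
  have hEmval : ∀ t : ℝ, 0 ≤ t → Em t = ∫ ω, Real.exp (-(2 * t * m ω)) * x ω ^ 2 ∂ν := by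
    intro t ht
    simp only [hEm, max_eq_left ht]
  -- the inner double integral as function of t
  have hK : ∀ t ∈ Set.uIcc (0:ℝ) T,
      (∫ r in (0:ℝ)..t, ∫ ω, m ω * Real.exp (-(2 * (t - r) * m ω)) * x ω ^ 2 ∂μ)
        = I0/2 - Em t / 2 := by
    intro t htmem
    have ht : 0 ≤ t := by
      rw [Set.uIcc_of_le hT.le] at htmem
      exact htmem.1
    have h1 : (∫ r in (0:ℝ)..t, ∫ ω, m ω * Real.exp (-(2 * (t - r) * m ω)) * x ω ^ 2 ∂μ)
        = ∫ r in (0:ℝ)..t, ∫ ω, m ω * Real.exp (-(2 * (t - r) * m ω)) * x ω ^ 2 ∂ν :=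
      intervalIntegral.integral_congr fun r _ => hnu t r
    rw [h1, hslice t ht]
    have h2 : (∫ ω, (1 - Real.exp (-(2 * t * m ω)))/2 * x ω ^ 2 ∂ν)
        = ∫ ω, (x ω ^ 2 / 2 - Real.exp (-(2 * t * m ω)) * x ω ^ 2 / 2) ∂ν := by
      refine integral_congr_ae (Filter.Eventually.of_forall fun ω => ?_)
      ring
    rw [h2, integral_sub (hxL2ν.div_const 2) ((hEint t ht).div_const 2),
      integral_div, integral_div, hEmval t ht]
  -- main equality
  have hmain : (∫ t in (0:ℝ)..T, ∫ r in (0:ℝ)..t,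
        ∫ ω, m ω * Real.exp (-(2 * (t - r) * m ω)) * x ω ^ 2 ∂μ)
      = T/2 * I0 - (1/2) * ∫ t in (0:ℝ)..T, Em t := by
    rw [intervalIntegral.integral_congr hK]
    rw [intervalIntegral.integral_sub (intervalIntegrable_const)
      ((hEmcont.intervalIntegrable 0 T).div_const 2)]
    simp only [intervalIntegral.integral_div, intervalIntegral.integral_const, smul_eq_mul]
    ring
  have hEmeq : (∫ t in (0:ℝ)..T, Em t)
      = ∫ t in (0:ℝ)..T, ∫ ω, Real.exp (-(2 * t * m ω)) * x ω ^ 2 ∂μ := by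
    refine intervalIntegral.integral_congr fun t htmem => ?_
    have ht : 0 ≤ t := by
      rw [Set.uIcc_of_le hT.le] at htmem
      exact htmem.1
    rw [hEmval t ht, hnuE t]
  constructor
  · rw [hmain, hEmeq, hnuI]
  · -- inequality
    have hb : ∀ t ∈ Set.Icc (0:ℝ) T, Em t ≤ Real.exp (-(2 * t * δ)) * I0 := by
      intro t ht
      rw [hEmval t ht.1]
      have hmono : (∫ ω, Real.exp (-(2 * t * m ω)) * x ω ^ 2 ∂ν)
          ≤ ∫ ω, Real.exp (-(2 * t * δ)) * x ω ^ 2 ∂ν := by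
        refine integral_mono (hEint t ht.1) (hxL2ν.const_mul _) fun ω => ?_
        have := hmδ ω
        have h1 : -(2 * t * m ω) ≤ -(2 * t * δ) := by nlinarith [ht.1]
        exact mul_le_mul_of_nonneg_right (Real.exp_le_exp.mpr h1) (sq_nonneg _)
      rw [integral_const_mul] at hmono
      exact hmono
    have hJle : (∫ t in (0:ℝ)..T, Em t)
        ≤ ∫ t in (0:ℝ)..T, Real.exp (-(2 * t * δ)) * I0 := by
      refine intervalIntegral.integral_mono_on hT.le (hEmcont.intervalIntegrable 0 T)
        (Continuous.intervalIntegrable (by fun_prop) 0 T) hb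
    have hexpint : (∫ t in (0:ℝ)..T, Real.exp (-(2 * t * δ)) * I0)
        = (1 - Real.exp (-(2 * T * δ)))/(2*δ) * I0 := by
      have hderiv : ∀ t ∈ Set.uIcc (0:ℝ) T,
          HasDerivAt (fun t => -(Real.exp (-(2 * t * δ)))/(2*δ) * I0)
            (Real.exp (-(2 * t * δ)) * I0) t := by
        intro t _
        have h1 : HasDerivAt (fun t : ℝ => -(2 * t * δ)) (-(2*δ)) t := by
          have : HasDerivAt (fun t : ℝ => (-(2*δ)) * t) (-(2*δ)) t := by
            simpa using (hasDerivAt_id t).const_mul (-(2*δ))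
          convert this using 2 with t
          ring
        have := (((h1.exp).neg).div_const (2*δ)).mul_const I0
        refine this.congr_deriv ?_
        field_simp [ne_of_gt hδ]
      rw [intervalIntegral.integral_eq_sub_of_hasDerivAt hderiv
        (Continuous.intervalIntegrable (by fun_prop) 0 T)]
      simp only [mul_zero, zero_mul, neg_zero, Real.exp_zero]
      ring
    rw [hmain, hnuI]
    have hkey : (1/2) * (∫ t in (0:ℝ)..T, Em t)
        ≤ (1 - Real.exp (-(2 * T * δ)))/(4*δ) * I0 := by
      have hδ0 : δ ≠ 0 := ne_of_gt hδ
      have h0 : (1 - Real.exp (-(2 * T * δ)))/(4*δ)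
          = (1/2) * ((1 - Real.exp (-(2 * T * δ)))/(2*δ)) := by
        ring
      have h1 : (1 - Real.exp (-(2 * T * δ)))/(4*δ) * I0
          = (1/2) * ((1 - Real.exp (-(2 * T * δ)))/(2*δ) * I0) := by
        rw [h0, mul_assoc]
      rw [h1]
      linarith [hJle, hexpint ▸ hJle]
    linarith
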